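/- arXiv:2108.03811 — 2 statements merged into one kernel-verified Lean document; each statement's English description precedes it below -/
import Mathlib

section
/- Let n ≥ 2 be even with k = n/2 odd, let N ≥ 2, set ω = exp(2πi/n), and let η_1, …, η_{2N} be elements of an associative unital ℂ-algebra, indexed cyclically mod 2N, satisfying η_j η_{j+1} = ω η_{j+1} η_j for all j, η_j η_k = η_k η_j whenever k ≢ j±1 (mod 2N), and η_j^n = 1 for all j. Define A₀ = Σ_{j=1}^{N} η_{2j−1}^k and A₁ = Σ_{j=1}^{N} η_{2j}^k. Then A₀ and A₁ satisfy the Dolan–Grady condition with constant C = 16, i.e. [A₀,[A₀,[A₀,A₁]]] = 16·[A₀,A₁] and [A₁,[A₁,[A₁,A₀]]] = 16·[A₁,A₀]. -/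
lemma myLieSum {A : Type*} [Ring A] {ι : Type*} (x : A) (s : Finset ι) (f : ι → A) :
    ⁅x, ∑ i ∈ s, f i⁆ = ∑ i ∈ s, ⁅x, f i⁆ := by
  simp only [Ring.lie_def, Finset.mul_sum, Finset.sum_mul, ← Finset.sum_sub_distrib]

lemma mySumLie {A : Type*} [Ring A] {ι : Type*} (x : A) (s : Finset ι) (f : ι → A) :
    ⁅∑ i ∈ s, f i, x⁆ = ∑ i ∈ s, ⁅f i, x⁆ := by
  simp only [Ring.lie_def, Finset.mul_sum, Finset.sum_mul, ← Finset.sum_sub_distrib]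

lemma myLieMul {A : Type*} [Ring A] (p q r : A) (h : p * q = q * p) : ⁅p, q * r⁆ = q * ⁅p, r⁆ := by
  rw [Ring.lie_def, Ring.lie_def, mul_sub, ← mul_assoc, h, mul_assoc, mul_assoc]

lemma myLieAdd {A : Type*} [Ring A] (x y z : A) : ⁅x, y + z⁆ = ⁅x, y⁆ + ⁅x, z⁆ := by
  simp only [Ring.lie_def, mul_add, add_mul]; abel

lemma dg_alg {A : Type*} [Ring A] [Algebra ℂ A] (X u v x : A)
    (hXu : X * u = u * X) (hXv : X * v = v * X)
    (hux : u * x = -(x * u)) (hxv : x * v = -(v * x)) (huv : u * v = v * u)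
    (hu2 : u * u = 1) (hv2 : v * v = 1)
    (hsplit : ⁅X, x⁆ = ⁅u, x⁆ + ⁅v, x⁆) :
    ⁅X, ⁅X, ⁅X, x⁆⁆⁆ = (16 : ℂ) • ⁅X, x⁆ := by
  set B := ⁅X, x⁆ with hBdef
  have hu2' : ∀ t : A, u * (u * t) = t := fun t => by rw [← mul_assoc, hu2, one_mul]
  have hv2' : ∀ t : A, v * (v * t) = t := fun t => by rw [← mul_assoc, hv2, one_mul]
  have hvu' : ∀ t : A, v * (u * t) = u * (v * t) := fun t => by
    rw [← mul_assoc, ← huv, mul_assoc]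
  have hLu : ∀ t : A, ⁅X, u * t⁆ = u * ⁅X, t⁆ := fun t => myLieMul X u t hXu
  have hLv : ∀ t : A, ⁅X, v * t⁆ = v * ⁅X, t⁆ := fun t => myLieMul X v t hXv
  have hxu : x * u = -(u * x) := by rw [hux, neg_neg]
  have hB : B = u * x + u * x + (v * x + v * x) := by
    rw [hsplit, Ring.lie_def, Ring.lie_def, hxu, hxv, sub_neg_eq_add, sub_neg_eq_add]
  have hXB : ⁅X, B⁆ = u * B + u * B + (v * B + v * B) := by
    conv_lhs => rw [hB]
    simp only [myLieAdd, hLu, hLv]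
    rfl
  have huvB : u * (v * B) = B := by
    conv_lhs => rw [hB]
    simp only [mul_add, hvu', hu2', hv2']
    rw [hB]; abel
  have main : ⁅X, ⁅X, B⁆⁆ = (16 : ℕ) • B := by
    conv_lhs => rw [hXB]
    simp only [myLieAdd, hLu, hLv, hXB]
    simp only [mul_add, hu2', hv2', hvu']
    rw [huvB]
    abel
  rw [show (16 : ℂ) • B = (16 : ℕ) • B by
    rw [show (16 : ℂ) = ((16 : ℕ) : ℂ) by norm_num, Nat.cast_smul_eq_nsmul]]
  exact main

lemma odd_ne_even (N : ℕ) (c d : ZMod (2 * N)) : 2 * c + 1 ≠ 2 * d := by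
  intro h
  have h2 := congrArg (ZMod.castHom (dvd_mul_right 2 N) (ZMod 2)) h
  simp only [map_add, map_mul, map_one, map_ofNat] at h2
  rw [show ((2 : ZMod 2)) = 0 by decide] at h2
  simp at h2

lemma nat_ne_zero_zmod (N r : ℕ) (hN : 2 ≤ N) (hr : 0 < r) (hr4 : r < 4) :
    ((r : ℕ) : ZMod (2 * N)) ≠ 0 := by
  rw [Ne, ZMod.natCast_eq_zero_iff]
  intro hdvd
  have := Nat.le_of_dvd hr hdvd
  omega

lemma odd_label_inj (N : ℕ) (s t : ℕ)
    (h : (2 * (s : ZMod (2 * N)) + 1 : ZMod (2 * N)) = 2 * (t : ZMod (2 * N)) + 1) :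
    s % N = t % N := by
  have h' : ((2 * s + 1 : ℕ) : ZMod (2 * N)) = ((2 * t + 1 : ℕ) : ZMod (2 * N)) := by
    push_cast; linear_combination h
  rw [ZMod.natCast_eq_natCast_iff] at h'
  have hd := (Nat.modEq_iff_dvd).mp h'
  have hd2 : (2 * N : ℤ) ∣ 2 * ((t : ℤ) - s) := by
    have he : ((2 * t + 1 : ℕ) : ℤ) - ((2 * s + 1 : ℕ) : ℤ) = 2 * ((t : ℤ) - s) := by
      push_cast; ring
    rwa [he] at hd
  have hd3 : (N : ℤ) ∣ (t : ℤ) - s := by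
    rcases hd2 with ⟨c, hc⟩
    refine ⟨c, ?_⟩
    have h2c : (2 : ℤ) * ((t : ℤ) - s) = 2 * ((N : ℤ) * c) := by linarith
    exact mul_left_cancel₀ two_ne_zero h2c
  exact (Nat.modEq_iff_dvd).mpr hd3

lemma odd_label_congr (N : ℕ) (s t : ℕ) (h : s % N = t % N) :
    (2 * (s : ZMod (2 * N)) + 1 : ZMod (2 * N)) = 2 * (t : ZMod (2 * N)) + 1 := by
  have h1 : (2 * s + 1) ≡ (2 * t + 1) [MOD 2 * N] := (Nat.ModEq.mul_left' (c := 2) h).add_right 1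
  have := (ZMod.natCast_eq_natCast_iff _ _ _).mpr h1
  push_cast at this
  linear_combination this

lemma dg_core (N : ℕ) (hN : 2 ≤ N) {A : Type*} [Ring A] [Algebra ℂ A]
    (a : ZMod (2 * N) → A)
    (h1 : ∀ j : ZMod (2 * N), a j * a (j + 1) = -(a (j + 1) * a j))
    (h2 : ∀ j l : ZMod (2 * N), l ≠ j + 1 → l ≠ j - 1 → a j * a l = a l * a j)
    (h3 : ∀ j : ZMod (2 * N), a j * a j = 1) :
    ⁅∑ j ∈ Finset.range N, a (2 * (j : ZMod (2 * N)) + 1),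
     ⁅∑ j ∈ Finset.range N, a (2 * (j : ZMod (2 * N)) + 1),
      ⁅∑ j ∈ Finset.range N, a (2 * (j : ZMod (2 * N)) + 1),
       ∑ j ∈ Finset.range N, a (2 * (j : ZMod (2 * N)) + 2)⁆⁆⁆
    = (16 : ℂ) • ⁅∑ j ∈ Finset.range N, a (2 * (j : ZMod (2 * N)) + 1),
       ∑ j ∈ Finset.range N, a (2 * (j : ZMod (2 * N)) + 2)⁆ := by
  have hone : (1 : ZMod (2 * N)) ≠ 0 := by
    have := nat_ne_zero_zmod N 1 hN (by omega) (by omega); simpa using this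
  have hthree : (3 : ZMod (2 * N)) ≠ 0 := by
    have := nat_ne_zero_zmod N 3 hN (by omega) (by omega)
    rwa [show ((3 : ℕ) : ZMod (2 * N)) = 3 by push_cast; ring] at this
  set X := ∑ j ∈ Finset.range N, a (2 * (j : ZMod (2 * N)) + 1) with hX
  have hXcomm : ∀ c : ZMod (2 * N), X * a (2 * c + 1) = a (2 * c + 1) * X := by
    intro c
    rw [hX, Finset.sum_mul, Finset.mul_sum]
    refine Finset.sum_congr rfl fun j _ => ?_
    exact h2 _ _ (fun h => odd_ne_even N c (j + 1) (by linear_combination h))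
      (fun h => odd_ne_even N c j (by linear_combination h))
  have persite : ∀ i ∈ Finset.range N,
      ⁅X, ⁅X, ⁅X, a (2 * (i : ZMod (2 * N)) + 2)⁆⁆⁆
        = (16 : ℂ) • ⁅X, a (2 * (i : ZMod (2 * N)) + 2)⁆ := by
    intro i hi
    rw [Finset.mem_range] at hi
    set m : ZMod (2 * N) := 2 * (i : ZMod (2 * N)) + 2 with hm
    have hXu : X * a (2 * (i : ZMod (2 * N)) + 1) = a (2 * (i : ZMod (2 * N)) + 1) * X :=
      hXcomm _
    have hXv : X * a (m + 1) = a (m + 1) * X := by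
      have := hXcomm ((i : ZMod (2 * N)) + 1)
      rwa [show (2 * ((i : ZMod (2 * N)) + 1) + 1) = m + 1 by rw [hm]; ring] at this
    have hux : a (2 * (i : ZMod (2 * N)) + 1) * a m
        = -(a m * a (2 * (i : ZMod (2 * N)) + 1)) := by
      have := h1 (2 * (i : ZMod (2 * N)) + 1)
      rwa [show (2 * (i : ZMod (2 * N)) + 1 + 1) = m by rw [hm]; ring] at this
    have hxv : a m * a (m + 1) = -(a (m + 1) * a m) := h1 m
    have huv : a (2 * (i : ZMod (2 * N)) + 1) * a (m + 1)
        = a (m + 1) * a (2 * (i : ZMod (2 * N)) + 1) := by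
      refine h2 _ _ (fun h => hone ?_) (fun h => hthree ?_)
      · rw [hm] at h; linear_combination h
      · rw [hm] at h; linear_combination h
    have hu2 := h3 (2 * (i : ZMod (2 * N)) + 1)
    have hv2 := h3 (m + 1)
    -- the split of ⁅X, a m⁆
    set i' := (i + 1) % N with hi'
    have hi'lt : i' < N := Nat.mod_lt _ (by omega)
    have hine : i ≠ i' := by
      intro h
      have hmod : (i + 1) % N = i % N := by
        rw [Nat.mod_eq_of_lt hi]; exact hi'.symm.trans h.symm
      have hdvd := (Nat.modEq_iff_dvd).mp (hmod : (i+1) ≡ i [MOD N])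
      have : (N : ℤ) ∣ 1 := by
        have he : (i : ℤ) - ((i : ℤ) + 1) = -1 := by ring
        rw [show ((i:ℕ):ℤ) - (((i+1:ℕ)):ℤ) = -1 by push_cast; ring] at hdvd
        exact (dvd_neg).mp hdvd
      have := Int.le_of_dvd (by omega) this
      omega
    have hsub : ({i, i'} : Finset ℕ) ⊆ Finset.range N := by
      intro z hz
      simp only [Finset.mem_insert, Finset.mem_singleton] at hz
      rcases hz with rfl | rfl <;> simp [Finset.mem_range, hi, hi'lt]
    have hvan : ∀ j ∈ Finset.range N, j ∉ ({i, i'} : Finset ℕ) →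
        ⁅a (2 * (j : ZMod (2 * N)) + 1), a m⁆ = 0 := by
      intro j hj hnot
      rw [Finset.mem_range] at hj
      simp only [Finset.mem_insert, Finset.mem_singleton, not_or] at hnot
      obtain ⟨hji, hji'⟩ := hnot
      have hc : a m * a (2 * (j : ZMod (2 * N)) + 1) = a (2 * (j : ZMod (2 * N)) + 1) * a m := by
        refine h2 m _ (fun h => hji' ?_) (fun h => hji ?_)
        · have := odd_label_inj N j (i + 1) (by rw [hm] at h; push_cast; linear_combination h)
          rw [Nat.mod_eq_of_lt hj] at this
          rw [this, hi']
        · have := odd_label_inj N j i (by rw [hm] at h; linear_combination h)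
          rw [Nat.mod_eq_of_lt hj, Nat.mod_eq_of_lt hi] at this
          exact this
      rw [Ring.lie_def, sub_eq_zero]
      exact hc.symm
    have hsplit : ⁅X, a m⁆ = ⁅a (2 * (i : ZMod (2 * N)) + 1), a m⁆ + ⁅a (m + 1), a m⁆ := by
      rw [hX, mySumLie, ← Finset.sum_subset hsub hvan, Finset.sum_pair hine]
      have hlab : (2 * ((i' : ℕ) : ZMod (2 * N)) + 1 : ZMod (2 * N)) = m + 1 := by
        have h0 := odd_label_congr N i' (i + 1) (by rw [hi']; exact Nat.mod_mod_of_dvd _ dvd_rfl)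
        rw [hm]; push_cast at h0 ⊢; linear_combination h0
      rw [hlab]
    exact dg_alg X _ _ _ hXu hXv hux hxv huv hu2 hv2 hsplit
  rw [myLieSum, myLieSum, myLieSum, Finset.smul_sum]
  exact Finset.sum_congr rfl persite

section swap
variable {A : Type*} [Ring A] [Algebra ℂ A]

lemma swap_pow_one (ω : ℂ) (x y : A) (h : x * y = ω • (y * x)) (p : ℕ) :
    x ^ p * y = ω ^ p • (y * x ^ p) := by
  induction p with
  | zero => simp
  | succ p ih =>
      rw [pow_succ, mul_assoc, h, mul_smul_comm, ← mul_assoc, ih, smul_mul_assoc,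
        smul_smul, mul_assoc, pow_succ, ← mul_assoc y, mul_comm (ω ^ p) ω]

lemma swap_pow (ω : ℂ) (x y : A) (h : x * y = ω • (y * x)) (p q : ℕ) :
    x ^ p * y ^ q = ω ^ (p * q) • (y ^ q * x ^ p) := by
  induction q with
  | zero => simp
  | succ q ih =>
      rw [pow_succ, ← mul_assoc, ih, smul_mul_assoc, mul_assoc, swap_pow_one ω x y h p,
        mul_smul_comm, smul_smul, ← pow_add, ← mul_assoc]
      ring_nf

end swap

open Complex in
/-- Corollary 1 of the paper, case `n/2` odd.
Let `n ≥ 2` be even with `k = n/2` odd, `ω = exp(2πi/n)`, and let `η_j`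
(indexed cyclically mod `2N`, `N ≥ 2`) satisfy `η_j η_{j+1} = ω η_{j+1} η_j`,
`η_j η_k = η_k η_j` for `k ≢ j ± 1 (mod 2N)`, and `η_j^n = 1`.
Then `A₀ = Σ η_{2j−1}^k` and `A₁ = Σ η_{2j}^k` satisfy the Dolan–Grady condition
with constant `C = 16`. -/
theorem dolan_grady_clock_half_odd
    (n k : ℕ) (hn : 2 ≤ n) (hk : n = 2 * k) (hkodd : Odd k)
    (N : ℕ) (hN : 2 ≤ N) (A : Type*) [Ring A] [Algebra ℂ A]
    (ω : ℂ) (hω : ω = Complex.exp (2 * Real.pi * Complex.I / n))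
    (η : ZMod (2 * N) → A)
    (hanti : ∀ j : ZMod (2 * N), η j * η (j + 1) = ω • (η (j + 1) * η j))
    (hcomm : ∀ j l : ZMod (2 * N), l ≠ j + 1 → l ≠ j - 1 → η j * η l = η l * η j)
    (hpow : ∀ j : ZMod (2 * N), η j ^ n = 1)
    (A₀ A₁ : A)
    (hA₀ : A₀ = ∑ j ∈ Finset.range N, η (2 * (j : ZMod (2 * N)) + 1) ^ k)
    (hA₁ : A₁ = ∑ j ∈ Finset.range N, η (2 * (j : ZMod (2 * N)) + 2) ^ k) :
    ⁅A₀, ⁅A₀, ⁅A₀, A₁⁆⁆⁆ = (16 : ℂ) • ⁅A₀, A₁⁆ ∧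
    ⁅A₁, ⁅A₁, ⁅A₁, A₀⁆⁆⁆ = (16 : ℂ) • ⁅A₁, A₀⁆ := by
  have hωk2 : ω ^ (k * k) = -1 := by
    have hωk : ω ^ k = -1 := by
      rw [hω, ← Complex.exp_nat_mul]
      rw [show (k : ℂ) * (2 * Real.pi * Complex.I / n) = Real.pi * Complex.I by
        rw [hk]; push_cast
        have : (k : ℂ) ≠ 0 := by exact_mod_cast Nat.cast_ne_zero.mpr (by omega)
        field_simp]
      exact Complex.exp_pi_mul_I
    rw [pow_mul, hωk, hkodd.neg_one_pow]
  set a : ZMod (2 * N) → A := fun j => η j ^ k with ha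
  have ha1 : ∀ j : ZMod (2 * N), a j * a (j + 1) = -(a (j + 1) * a j) := by
    intro j
    have := swap_pow ω (η j) (η (j + 1)) (hanti j) k k
    rw [hωk2, neg_one_smul] at this
    exact this
  have ha2 : ∀ j l : ZMod (2 * N), l ≠ j + 1 → l ≠ j - 1 → a j * a l = a l * a j := by
    intro j l hl1 hl2
    exact (Commute.pow_pow (hcomm j l hl1 hl2) k k)
  have ha3 : ∀ j : ZMod (2 * N), a j * a j = 1 := by
    intro j
    show η j ^ k * η j ^ k = 1
    rw [← pow_add, show k + k = n by omega, hpow]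
  constructor
  · have := dg_core N hN a ha1 ha2 ha3
    rw [hA₀, hA₁]
    exact this
  · -- shift the family by one
    set b : ZMod (2 * N) → A := fun j => a (j + 1) with hb
    have hb1 : ∀ j : ZMod (2 * N), b j * b (j + 1) = -(b (j + 1) * b j) := fun j => ha1 (j + 1)
    have hb2 : ∀ j l : ZMod (2 * N), l ≠ j + 1 → l ≠ j - 1 → b j * b l = b l * b j := by
      intro j l hl1 hl2
      refine ha2 (j + 1) (l + 1) (fun h => hl1 ?_) (fun h => hl2 ?_)
      · linear_combination h
      · linear_combination h
    have hb3 : ∀ j : ZMod (2 * N), b j * b j = 1 := fun j => ha3 (j + 1)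
    have key := dg_core N hN b hb1 hb2 hb3
    have hS1 : A₁ = ∑ j ∈ Finset.range N, b (2 * (j : ZMod (2 * N)) + 1) := by
      rw [hA₁]
      refine Finset.sum_congr rfl fun j _ => ?_
      show η (2 * (j : ZMod (2 * N)) + 2) ^ k = η (2 * (j : ZMod (2 * N)) + 1 + 1) ^ k
      congr 1
      ring
    have hS2 : A₀ = ∑ j ∈ Finset.range N, b (2 * (j : ZMod (2 * N)) + 2) := by
      rw [hA₀]
      have hstep1 : ∑ j ∈ Finset.range N, b (2 * (j : ZMod (2 * N)) + 2)
          = ∑ j ∈ Finset.range N, η (2 * ((j + 1 : ℕ) : ZMod (2 * N)) + 1) ^ k := by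
        refine Finset.sum_congr rfl fun j _ => ?_
        show η (2 * (j : ZMod (2 * N)) + 2 + 1) ^ k = _
        congr 1
        push_cast
        ring
      rw [hstep1]
      set F : ℕ → A := fun t => η (2 * (t : ZMod (2 * N)) + 1) ^ k with hF
      have hFN0 : F N = F 0 :=
        congrArg (fun z => η z ^ k) (odd_label_congr N N 0 (by simp))
      have e1 := Finset.sum_range_succ' F N
      have e2 := Finset.sum_range_succ F N
      rw [hFN0] at e2
      have e3 : (∑ i ∈ Finset.range N, F (i + 1)) + F 0 = (∑ i ∈ Finset.range N, F i) + F 0 :=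
        e1.symm.trans e2
      exact (add_right_cancel e3).symm
    rw [hS1, hS2]
    exact key
end

section
/- Let n ≥ 2, set ω = exp(2πi/n), let N ≥ 2, and let η_1, …, η_{2N} be elements of an associative unital ℂ-algebra, indexed cyclically mod 2N, satisfying η_j η_{j+1} = ω η_{j+1} η_j for all j, η_j η_k = η_k η_j whenever k ≢ j±1 (mod 2N), and η_j^n = 1 for all j. Define A₀ = Σ_{j=1}^{N} Σ_{k=1}^{n−1} η_{2j−1}^k / (1 − ω^{−k}) and A₁ = Σ_{j=1}^{N} Σ_{k=1}^{n−1} η_{2j}^k / (1 − ω^{−k}). Then A₀ and A₁ satisfy the Dolan–Grady condition with constant C = n², i.e. [A₀,[A₀,[A₀,A₁]]] = n²·[A₀,A₁] and [A₁,[A₁,[A₁,A₀]]] = n²·[A₁,A₀]. -/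
set_option linter.unusedVariables false
set_option linter.unusedSectionVars false
set_option maxHeartbeats 1000000

open Finset


section Scalar
variable {n : ℕ} {ω : ℂ}

lemma dg_omega_ne_zero (hn : 2 ≤ n) (hprim : IsPrimitiveRoot ω n) : ω ≠ 0 :=
  hprim.ne_zero (by omega)

lemma dg_pow_ne_one (hn : 2 ≤ n) (hprim : IsPrimitiveRoot ω n)
    {k : ℕ} (h1 : 1 ≤ k) (h2 : k ≤ n - 1) : ω ^ k ≠ 1 :=
  hprim.pow_ne_one_of_pos_of_lt (by omega) (by omega)

lemma dg_geom_sum {s : ℂ} (hs : s ^ n = 1) (hs1 : s ≠ 1) :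
    ∑ k ∈ range n, s ^ k = 0 := by
  rw [geom_sum_eq hs1, hs, sub_self, zero_div]

lemma dg_icc_sum (hn : 2 ≤ n) {s : ℂ} (hs : s ^ n = 1) :
    ∑ k ∈ Icc 1 (n-1), s ^ k = (if s = 1 then (n:ℂ) else 0) - 1 := by
  have h1 : Icc 1 (n-1) = Ico 1 n := by
    rw [← Finset.Ico_add_one_right_eq_Icc]; congr 1; omega
  have h2 : ∑ k ∈ range n, s ^ k = 1 + ∑ k ∈ Ico 1 n, s ^ k := by
    rw [range_eq_Ico, ← Finset.sum_Ico_consecutive _ (by omega : 0 ≤ 1) (by omega : 1 ≤ n)]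
    congr 1
    simp
  rw [h1]
  split_ifs with h
  · subst h
    simp only [one_pow, Finset.sum_const, nsmul_eq_mul, mul_one, Nat.card_Ico]
    rw [Nat.cast_sub (by omega)]
    norm_num
  · have h0 := dg_geom_sum hs h
    rw [h2] at h0
    linear_combination h0

lemma dg_star_sum (hn : 2 ≤ n) (hprim : IsPrimitiveRoot ω n)
    (l m : ℕ) (hl1 : 1 ≤ l) (hl2 : l < n) (hm : m < n) :
    ∑ k ∈ Icc 1 (n-1), (1 - (ω^k)⁻¹)⁻¹ * ((1 - (ω^(k*l))⁻¹) * ω^(m*k))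
    = (if m < l then (n:ℂ) else 0) - l := by
  have hω0 : ω ≠ 0 := dg_omega_ne_zero hn hprim
  have key : ∀ k ∈ Icc 1 (n-1), (1 - (ω^k)⁻¹)⁻¹ * ((1 - (ω^(k*l))⁻¹) * ω^(m*k))
      = ∑ p ∈ range l, (ω^m * (ω^p)⁻¹)^k := by
    intro k hk
    simp only [mem_Icc] at hk
    have hk1 : ω ^ k ≠ 1 := dg_pow_ne_one hn hprim hk.1 hk.2
    set r : ℂ := (ω^k)⁻¹ with hr
    have hr1 : r ≠ 1 := by
      rw [hr]; intro h; apply hk1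
      rw [inv_eq_one] at h; exact h
    have hne : (1:ℂ) - r ≠ 0 := by
      intro h; apply hr1; linear_combination -h
    have hrl : r ^ l = (ω^(k*l))⁻¹ := by
      rw [hr, ← inv_pow, ← inv_pow, ← pow_mul]
    have this1 : (1 - (ω^k)⁻¹)⁻¹ * (1 - (ω^(k*l))⁻¹) = ∑ p ∈ range l, r ^ p := by
      rw [← hr, ← hrl, inv_mul_eq_div, eq_comm, eq_div_iff hne]
      linear_combination -geom_sum_mul r l
    rw [← mul_assoc, this1, Finset.sum_mul]
    apply Finset.sum_congr rfl
    intro p _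
    rw [hr, mul_pow, ← inv_pow, ← inv_pow, ← pow_mul, ← pow_mul, ← pow_mul, mul_comm p k]
    ring
  rw [Finset.sum_congr rfl key, Finset.sum_comm]
  have inner : ∀ p ∈ range l, ∑ k ∈ Icc 1 (n-1), (ω^m * (ω^p)⁻¹)^k
      = (if p = m then (n:ℂ) else 0) - 1 := by
    intro p hp
    simp only [mem_range] at hp
    have hsn : (ω^m * (ω^p)⁻¹)^n = 1 := by
      rw [mul_pow, ← inv_pow, ← pow_mul, ← pow_mul, mul_comm m n, mul_comm p n, pow_mul, pow_mul,
        hprim.pow_eq_one]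
      simp [hprim.pow_eq_one]
    rw [dg_icc_sum hn hsn]
    congr 1
    have hiff : (ω^m * (ω^p)⁻¹ = 1) ↔ (p = m) := by
      constructor
      · intro h
        have h2 : ω ^ m = ω ^ p := by
          rw [mul_inv_eq_one₀ (pow_ne_zero _ hω0)] at h
          exact h
        exact (hprim.pow_inj hm (by omega) h2).symm
      · intro h; subst h; rw [mul_inv_eq_one₀ (pow_ne_zero _ hω0)]
    simp only [hiff]
  rw [Finset.sum_congr rfl inner, Finset.sum_sub_distrib]
  congr 1
  · rw [Finset.sum_ite_eq' (range l) m (fun _ => (n:ℂ))]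
    simp only [mem_range]
  · simp
end Scalar


section Alg
variable {A : Type*} [Ring A] [Algebra ℂ A] {n : ℕ} {ω : ℂ}

lemma dg_swap_one {x y : A} (h : x * y = ω • (y * x)) (k : ℕ) :
    x ^ k * y = (ω ^ k) • (y * x ^ k) := by
  induction k with
  | zero => simp
  | succ k ih =>
    rw [pow_succ, mul_assoc, h, mul_smul_comm, ← mul_assoc, ih, smul_mul_assoc,
      mul_assoc, smul_smul, pow_succ, mul_comm (ω ^ k) ω]

lemma dg_swap_pow {x y : A} (h : x * y = ω • (y * x)) (k l : ℕ) :
    x ^ k * y ^ l = (ω ^ (k * l)) • (y ^ l * x ^ k) := by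
  induction l with
  | zero => simp
  | succ l ih =>
    rw [pow_succ, ← mul_assoc, ih, smul_mul_assoc, mul_assoc, dg_swap_one h k,
      mul_smul_comm, smul_smul, ← mul_assoc, ← pow_succ, ← pow_add, Nat.mul_succ]

lemma dg_swap_pow' (hω : ω ≠ 0) {x y : A} (h : x * y = ω • (y * x)) (k l : ℕ) :
    y ^ l * x ^ k = ((ω ^ (k * l))⁻¹) • (x ^ k * y ^ l) := by
  rw [dg_swap_pow h k l, smul_smul, inv_mul_cancel₀ (pow_ne_zero _ hω), one_smul]

/-- The spectral idempotent-like element attached to `z`. -/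
noncomputable def dgE (n : ℕ) (ω : ℂ) (z : A) (m : ℕ) : A :=
  (n : ℂ)⁻¹ • ∑ k ∈ range n, ((ω ^ (m * k))⁻¹) • z ^ k

lemma dg_sum_eid (hn : 2 ≤ n) (hprim : IsPrimitiveRoot ω n) {z : A} (hz : z ^ n = 1) :
    ∑ m ∈ range n, dgE n ω z m = 1 := by
  unfold dgE
  rw [← Finset.smul_sum, Finset.sum_comm]
  have h1 : ∀ k ∈ range n, ∑ m ∈ range n, ((ω ^ (m * k))⁻¹) • z ^ k
      = (if k = 0 then (n : ℂ) else 0) • z ^ k := by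
    intro k hk
    simp only [mem_range] at hk
    rw [← Finset.sum_smul]
    congr 1
    have h0 : ∀ m, (ω ^ (m * k))⁻¹ = ((ω ^ k)⁻¹) ^ m := by
      intro m; rw [← inv_pow, ← inv_pow, ← pow_mul, mul_comm m k]
    simp only [h0]
    split_ifs with h
    · subst h; simp
    · apply dg_geom_sum
      · have : ((ω ^ k)⁻¹) ^ n = ((ω ^ n) ^ k)⁻¹ := by
          rw [inv_pow, ← pow_mul, mul_comm k n, pow_mul]
        rw [this, hprim.pow_eq_one, one_pow, inv_one]
      · rw [ne_eq, inv_eq_one]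
        exact dg_pow_ne_one hn hprim (by omega) (by omega)
  rw [Finset.sum_congr rfl h1]
  have h2 : ∑ k ∈ range n, (if k = 0 then (n:ℂ) else 0) • z ^ k = (n : ℂ) • (1 : A) := by
    rw [Finset.sum_eq_single 0]
    · simp
    · intro b _ hb; simp [hb]
    · intro h; simp at h; omega
  rw [h2, smul_smul, inv_mul_cancel₀ (Nat.cast_ne_zero.mpr (by omega) : (n:ℂ) ≠ 0), one_smul]

lemma dg_mul_eid (hn : 2 ≤ n) (hprim : IsPrimitiveRoot ω n) {z : A} (hz : z ^ n = 1) (m : ℕ) :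
    z * dgE n ω z m = (ω ^ m) • dgE n ω z m := by
  have hω0 : ω ≠ 0 := dg_omega_ne_zero hn hprim
  have hωm : (ω : ℂ) ^ m ≠ 0 := pow_ne_zero _ hω0
  unfold dgE
  set F : ℕ → A := fun j => (ω ^ m * (ω ^ (m * j))⁻¹) • z ^ j with hF
  have hL : ∀ k, z * ((ω ^ (m * k))⁻¹ • z ^ k) = F (k + 1) := by
    intro k
    rw [hF, mul_smul_comm, ← pow_succ']
    congr 1
    rw [Nat.mul_succ, pow_add, mul_inv]
    field_simp
  have hR : ∀ k, (ω ^ m) • (((ω ^ (m * k))⁻¹) • z ^ k) = F k := by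
    intro k; rw [hF, smul_smul]
  have hFn : F n = F 0 := by
    rw [hF]
    simp only [Nat.mul_zero, pow_zero, inv_one, mul_one, hz]
    rw [mul_comm m n, pow_mul, hprim.pow_eq_one, one_pow, inv_one, mul_one]
  have main : ∑ k ∈ range n, z * ((ω ^ (m * k))⁻¹ • z ^ k)
      = ∑ k ∈ range n, (ω ^ m) • (((ω ^ (m * k))⁻¹) • z ^ k) := by
    simp only [hL, hR]
    have h1 := Finset.sum_range_succ' F n
    have h2 := Finset.sum_range_succ F n
    rw [hFn] at h2
    exact add_right_cancel (h1.symm.trans h2)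
  calc z * ((n:ℂ)⁻¹ • ∑ k ∈ range n, ((ω ^ (m * k))⁻¹) • z ^ k)
      = (n:ℂ)⁻¹ • ∑ k ∈ range n, z * (((ω ^ (m * k))⁻¹) • z ^ k) := by
        rw [mul_smul_comm, Finset.mul_sum]
    _ = (n:ℂ)⁻¹ • ∑ k ∈ range n, (ω ^ m) • (((ω ^ (m * k))⁻¹) • z ^ k) := by rw [main]
    _ = (ω ^ m) • ((n:ℂ)⁻¹ • ∑ k ∈ range n, ((ω ^ (m * k))⁻¹) • z ^ k) := by
        rw [← Finset.smul_sum, smul_comm]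

lemma dg_pow_mul_eid (hn : 2 ≤ n) (hprim : IsPrimitiveRoot ω n) {z : A} (hz : z ^ n = 1)
    (m k : ℕ) : z ^ k * dgE n ω z m = (ω ^ (m * k)) • dgE n ω z m := by
  induction k with
  | zero => simp
  | succ k ih =>
    rw [pow_succ, mul_assoc, dg_mul_eid hn hprim hz, mul_smul_comm, ih, smul_smul,
      Nat.mul_succ, pow_add, mul_comm (ω ^ (m*k))]

lemma dg_commute_eid {w z : A} (h : Commute w z) (m : ℕ) : Commute w (dgE n ω z m) := by
  unfold dgE
  exact Commute.smul_right (Commute.sum_right _ _ _ (fun k _ => Commute.smul_right (h.pow_right k) _)) _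
end Alg


section LocalLemma
variable {A : Type*} [Ring A] [Algebra ℂ A] {n : ℕ} {ω : ℂ}
variable {x y x' : A}

lemma dg_M1 (hn : 2 ≤ n) (hprim : IsPrimitiveRoot ω n) (hx : x ^ n = 1)
    (m l j k : ℕ) :
    x ^ k * (dgE n ω x m * (y ^ l * dgE n ω x' j))
      = (ω ^ (m*k)) • (dgE n ω x m * (y ^ l * dgE n ω x' j)) := by
  rw [← mul_assoc, dg_pow_mul_eid hn hprim hx, smul_mul_assoc]

lemma dg_M2 (hn : 2 ≤ n) (hprim : IsPrimitiveRoot ω n)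
    (hxy : x * y = ω • (y * x)) (hxx' : x * x' = x' * x) (hx : x ^ n = 1)
    (m l j k : ℕ) :
    (dgE n ω x m * (y ^ l * dgE n ω x' j)) * x ^ k
      = ((ω ^ (k*l))⁻¹ * ω ^ (m*k)) • (dgE n ω x m * (y ^ l * dgE n ω x' j)) := by
  have hω0 : ω ≠ 0 := dg_omega_ne_zero hn hprim
  have hcxx' : Commute x x' := hxx'
  have h1 : Commute (x ^ k) (dgE n ω x' j) :=
    dg_commute_eid (hcxx'.pow_left k) j
  have h2 : Commute (x ^ k) (dgE n ω x m) :=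
    dg_commute_eid ((Commute.refl x).pow_left k) m
  calc (dgE n ω x m * (y ^ l * dgE n ω x' j)) * x ^ k
      = dgE n ω x m * (y ^ l * (x ^ k * dgE n ω x' j)) := by
        simp only [mul_assoc, h1.symm.eq]
    _ = dgE n ω x m * ((y ^ l * x ^ k) * dgE n ω x' j) := by simp only [mul_assoc]
    _ = dgE n ω x m * (((ω ^ (k*l))⁻¹ • (x ^ k * y ^ l)) * dgE n ω x' j) := by
        rw [dg_swap_pow' hω0 hxy]
    _ = (ω ^ (k*l))⁻¹ • ((dgE n ω x m * x ^ k) * (y ^ l * dgE n ω x' j)) := by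
        simp only [smul_mul_assoc, mul_smul_comm, mul_assoc]
    _ = (ω ^ (k*l))⁻¹ • ((x ^ k * dgE n ω x m) * (y ^ l * dgE n ω x' j)) := by
        rw [← h2.eq]
    _ = ((ω ^ (k*l))⁻¹ * ω ^ (m*k)) • (dgE n ω x m * (y ^ l * dgE n ω x' j)) := by
        rw [dg_pow_mul_eid hn hprim hx, smul_mul_assoc, smul_smul]

lemma dg_M3 (hn : 2 ≤ n) (hprim : IsPrimitiveRoot ω n)
    (hx' : x' ^ n = 1) (m l j k : ℕ) :
    (dgE n ω x m * (y ^ l * dgE n ω x' j)) * x' ^ k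
      = (ω ^ (j*k)) • (dgE n ω x m * (y ^ l * dgE n ω x' j)) := by
  have h1 : Commute (x' ^ k) (dgE n ω x' j) :=
    dg_commute_eid ((Commute.refl x').pow_left k) j
  calc (dgE n ω x m * (y ^ l * dgE n ω x' j)) * x' ^ k
      = dgE n ω x m * (y ^ l * (x' ^ k * dgE n ω x' j)) := by
        simp only [mul_assoc, h1.symm.eq]
    _ = (ω ^ (j*k)) • (dgE n ω x m * (y ^ l * dgE n ω x' j)) := by
        rw [dg_pow_mul_eid hn hprim hx', mul_smul_comm, mul_smul_comm]

lemma dg_M4 (hn : 2 ≤ n) (hprim : IsPrimitiveRoot ω n)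
    (hyx' : y * x' = ω • (x' * y)) (hxx' : x * x' = x' * x) (hx' : x' ^ n = 1)
    (m l j k : ℕ) :
    x' ^ k * (dgE n ω x m * (y ^ l * dgE n ω x' j))
      = ((ω ^ (l*k))⁻¹ * ω ^ (j*k)) • (dgE n ω x m * (y ^ l * dgE n ω x' j)) := by
  have hω0 : ω ≠ 0 := dg_omega_ne_zero hn hprim
  have hcxx' : Commute x x' := hxx'
  have h1 : Commute (x' ^ k) (dgE n ω x m) :=
    dg_commute_eid (hcxx'.symm.pow_left k) m
  calc x' ^ k * (dgE n ω x m * (y ^ l * dgE n ω x' j))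
      = dgE n ω x m * ((x' ^ k * y ^ l) * dgE n ω x' j) := by
        rw [← mul_assoc, h1.eq]
        simp only [mul_assoc]
    _ = dgE n ω x m * (((ω ^ (l*k))⁻¹ • (y ^ l * x' ^ k)) * dgE n ω x' j) := by
        rw [dg_swap_pow' hω0 hyx']
    _ = (ω ^ (l*k))⁻¹ • (dgE n ω x m * (y ^ l * (x' ^ k * dgE n ω x' j))) := by
        simp only [smul_mul_assoc, mul_smul_comm, mul_assoc]
    _ = ((ω ^ (l*k))⁻¹ * ω ^ (j*k)) • (dgE n ω x m * (y ^ l * dgE n ω x' j)) := by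
        rw [dg_pow_mul_eid hn hprim hx', mul_smul_comm, mul_smul_comm, smul_smul]
end LocalLemma

section S1
variable {A : Type*} [Ring A] [Algebra ℂ A] {n : ℕ} {ω : ℂ}

lemma dg_add_lie (a b c : A) : ⁅a + b, c⁆ = ⁅a, c⁆ + ⁅b, c⁆ := by
  simp only [Ring.lie_def, add_mul, mul_add]; abel

lemma dg_lie_smul (t : ℂ) (a b : A) : ⁅a, t • b⁆ = t • ⁅a, b⁆ := by
  simp only [Ring.lie_def, mul_smul_comm, smul_mul_assoc, smul_sub]
variable {x y x' : A}

lemma dg_S1 (hn : 2 ≤ n) (hprim : IsPrimitiveRoot ω n)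
    (hxy : x * y = ω • (y * x)) (hxx' : x * x' = x' * x) (hx : x ^ n = 1)
    {m l j : ℕ} (hl1 : 1 ≤ l) (hl2 : l < n) (hm : m < n) :
    ⁅∑ k ∈ Icc 1 (n-1), (1 - (ω^k)⁻¹)⁻¹ • x ^ k,
      dgE n ω x m * (y ^ l * dgE n ω x' j)⁆
    = ((if m < l then (n:ℂ) else 0) - l) • (dgE n ω x m * (y ^ l * dgE n ω x' j)) := by
  rw [Ring.lie_def, Finset.sum_mul, Finset.mul_sum]
  simp only [smul_mul_assoc, mul_smul_comm, dg_M1 hn hprim hx m l j,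
    dg_M2 hn hprim hxy hxx' hx m l j, smul_smul]
  rw [← Finset.sum_sub_distrib]
  simp only [← sub_smul]
  rw [← Finset.sum_smul]
  congr 1
  have hterm : ∀ k ∈ Icc 1 (n-1),
      (1 - (ω^k)⁻¹)⁻¹ * ω^(m*k) - (1 - (ω^k)⁻¹)⁻¹ * ((ω^(k*l))⁻¹ * ω^(m*k))
      = (1 - (ω^k)⁻¹)⁻¹ * ((1 - (ω^(k*l))⁻¹) * ω^(m*k)) := by
    intro k _; ring
  rw [Finset.sum_congr rfl hterm, dg_star_sum hn hprim l m hl1 hl2 hm]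

lemma dg_S1' (hn : 2 ≤ n) (hprim : IsPrimitiveRoot ω n)
    (hyx' : y * x' = ω • (x' * y)) (hxx' : x * x' = x' * x) (hx' : x' ^ n = 1)
    {m l j : ℕ} (hl1 : 1 ≤ l) (hl2 : l < n) (hj : j < n) :
    ⁅∑ k ∈ Icc 1 (n-1), (1 - (ω^k)⁻¹)⁻¹ • x' ^ k,
      dgE n ω x m * (y ^ l * dgE n ω x' j)⁆
    = ((l:ℂ) - (if j < l then (n:ℂ) else 0)) • (dgE n ω x m * (y ^ l * dgE n ω x' j)) := by
  rw [Ring.lie_def, Finset.sum_mul, Finset.mul_sum]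
  simp only [smul_mul_assoc, mul_smul_comm, dg_M3 hn hprim hx' m l j,
    dg_M4 hn hprim hyx' hxx' hx' m l j, smul_smul]
  rw [← Finset.sum_sub_distrib]
  simp only [← sub_smul]
  rw [← Finset.sum_smul]
  congr 1
  have hterm : ∀ k ∈ Icc 1 (n-1),
      (1 - (ω^k)⁻¹)⁻¹ * ((ω^(l*k))⁻¹ * ω^(j*k)) - (1 - (ω^k)⁻¹)⁻¹ * ω^(j*k)
      = -((1 - (ω^k)⁻¹)⁻¹ * ((1 - (ω^(k*l))⁻¹) * ω^(j*k))) := by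
    intro k _; rw [mul_comm l k]; ring
  rw [Finset.sum_congr rfl hterm, Finset.sum_neg_distrib,
    dg_star_sum hn hprim l j hl1 hl2 hj]
  ring

lemma dg_W (hn : 2 ≤ n) (hprim : IsPrimitiveRoot ω n)
    (hxy : x * y = ω • (y * x)) (hyx' : y * x' = ω • (x' * y))
    (hxx' : x * x' = x' * x) (hx : x ^ n = 1) (hx' : x' ^ n = 1)
    {m l j : ℕ} (hl1 : 1 ≤ l) (hl2 : l < n) (hm : m < n) (hj : j < n) :
    ⁅(∑ k ∈ Icc 1 (n-1), (1 - (ω^k)⁻¹)⁻¹ • x ^ k)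
      + (∑ k ∈ Icc 1 (n-1), (1 - (ω^k)⁻¹)⁻¹ • x' ^ k),
      dgE n ω x m * (y ^ l * dgE n ω x' j)⁆
    = ((if m < l then (n:ℂ) else 0) - (if j < l then (n:ℂ) else 0))
        • (dgE n ω x m * (y ^ l * dgE n ω x' j)) := by
  rw [dg_add_lie, dg_S1 hn hprim hxy hxx' hx hl1 hl2 hm,
    dg_S1' hn hprim hyx' hxx' hx' hl1 hl2 hj, ← add_smul]
  congr 1
  ring
end S1

section LocalMain
variable {A : Type*} [Ring A] [Algebra ℂ A] {n : ℕ} {ω : ℂ}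
variable {x y x' : A}

lemma dg_lie_sum {ι : Type*} (s : Finset ι) (a : A) (f : ι → A) :
    ⁅a, ∑ i ∈ s, f i⁆ = ∑ i ∈ s, ⁅a, f i⁆ := by
  simp only [Ring.lie_def, Finset.mul_sum, Finset.sum_mul, ← Finset.sum_sub_distrib]

lemma dg_sum_lie {ι : Type*} (s : Finset ι) (a : A) (f : ι → A) :
    ⁅∑ i ∈ s, f i, a⁆ = ∑ i ∈ s, ⁅f i, a⁆ := by
  simp only [Ring.lie_def, Finset.mul_sum, Finset.sum_mul, ← Finset.sum_sub_distrib]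

lemma dg_local (hn : 2 ≤ n) (hprim : IsPrimitiveRoot ω n)
    (hxy : x * y = ω • (y * x)) (hyx' : y * x' = ω • (x' * y))
    (hxx' : x * x' = x' * x) (hx : x ^ n = 1) (hy : y ^ n = 1) (hx' : x' ^ n = 1)
    (W b : A)
    (hW : W = (∑ k ∈ Icc 1 (n-1), (1 - (ω^k)⁻¹)⁻¹ • x ^ k)
        + (∑ k ∈ Icc 1 (n-1), (1 - (ω^k)⁻¹)⁻¹ • x' ^ k))
    (hb : b = ∑ k ∈ Icc 1 (n-1), (1 - (ω^k)⁻¹)⁻¹ • y ^ k) :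
    ⁅W, ⁅W, ⁅W, b⁆⁆⁆ = ((n:ℂ)^2) • ⁅W, b⁆ := by
  have hω0 : ω ≠ 0 := dg_omega_ne_zero hn hprim
  -- resolution of identity
  have hyl : ∀ l : ℕ, y ^ l = ∑ m ∈ range n, ∑ j ∈ range n,
      dgE n ω x m * (y ^ l * dgE n ω x' j) := by
    intro l
    calc y ^ l = 1 * (y ^ l * 1) := by rw [mul_one, one_mul]
      _ = (∑ m ∈ range n, dgE n ω x m) * (y ^ l * (∑ j ∈ range n, dgE n ω x' j)) := by
          rw [dg_sum_eid hn hprim hx, dg_sum_eid hn hprim hx']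
      _ = ∑ m ∈ range n, ∑ j ∈ range n, dgE n ω x m * (y ^ l * dgE n ω x' j) := by
          rw [Finset.sum_mul]
          refine Finset.sum_congr rfl fun m _ => ?_
          rw [Finset.mul_sum, Finset.mul_sum]
  have hb2 : b = ∑ l ∈ Icc 1 (n-1), ∑ m ∈ range n, ∑ j ∈ range n,
      (1 - (ω^l)⁻¹)⁻¹ • (dgE n ω x m * (y ^ l * dgE n ω x' j)) := by
    rw [hb]
    refine Finset.sum_congr rfl fun l _ => ?_
    simp only [← Finset.smul_sum]
    rw [← hyl l]
  -- the master bracket identity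
  set ν : ℕ → ℕ → ℕ → ℂ := fun m j l =>
    (if m < l then (n:ℂ) else 0) - (if j < l then (n:ℂ) else 0) with hν
  have brkt : ∀ (t : ℕ → ℕ → ℕ → ℂ),
      ⁅W, ∑ l ∈ Icc 1 (n-1), ∑ m ∈ range n, ∑ j ∈ range n,
        t l m j • (dgE n ω x m * (y ^ l * dgE n ω x' j))⁆
      = ∑ l ∈ Icc 1 (n-1), ∑ m ∈ range n, ∑ j ∈ range n,
        (ν m j l * t l m j) • (dgE n ω x m * (y ^ l * dgE n ω x' j)) := by
    intro t
    rw [dg_lie_sum]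
    refine Finset.sum_congr rfl fun l hl => ?_
    rw [dg_lie_sum]
    refine Finset.sum_congr rfl fun m hm => ?_
    rw [dg_lie_sum]
    refine Finset.sum_congr rfl fun j hj => ?_
    simp only [mem_Icc, mem_range] at hl hm hj
    rw [dg_lie_smul, hW, dg_W hn hprim hxy hyx' hxx' hx hx' hl.1 (by omega) hm hj,
      smul_smul, hν, mul_comm]
  have h1 : ⁅W, b⁆ = ∑ l ∈ Icc 1 (n-1), ∑ m ∈ range n, ∑ j ∈ range n,
      (ν m j l * (1 - (ω^l)⁻¹)⁻¹) • (dgE n ω x m * (y ^ l * dgE n ω x' j)) := by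
    rw [hb2, brkt]
  have h2 : ⁅W, ⁅W, b⁆⁆ = ∑ l ∈ Icc 1 (n-1), ∑ m ∈ range n, ∑ j ∈ range n,
      (ν m j l * (ν m j l * (1 - (ω^l)⁻¹)⁻¹))
        • (dgE n ω x m * (y ^ l * dgE n ω x' j)) := by
    rw [h1, brkt]
  have h3 : ⁅W, ⁅W, ⁅W, b⁆⁆⁆ = ∑ l ∈ Icc 1 (n-1), ∑ m ∈ range n, ∑ j ∈ range n,
      (ν m j l * (ν m j l * (ν m j l * (1 - (ω^l)⁻¹)⁻¹)))
        • (dgE n ω x m * (y ^ l * dgE n ω x' j)) := by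
    rw [h2, brkt]
  rw [h3, h1, Finset.smul_sum]
  refine Finset.sum_congr rfl fun l _ => ?_
  rw [Finset.smul_sum]
  refine Finset.sum_congr rfl fun m _ => ?_
  rw [Finset.smul_sum]
  refine Finset.sum_congr rfl fun j _ => ?_
  rw [smul_smul]
  congr 1
  rw [hν]
  simp only
  split_ifs <;> ring
end LocalMain


section Glob
variable {A : Type*} [Ring A] [Algebra ℂ A]

lemma dg_commute_lie {a b c : A} (h1 : Commute a b) (h2 : Commute a c) :
    Commute a ⁅b, c⁆ := by
  rw [Ring.lie_def]
  exact (h1.mul_right h2).sub_right (h2.mul_right h1)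

lemma dg_commute_poly {z w : A} (h : Commute z w) (c d : ℕ → ℂ) (s t : Finset ℕ) :
    Commute (∑ k ∈ s, c k • z ^ k) (∑ k ∈ t, d k • w ^ k) := by
  apply Commute.sum_left
  intro k _
  apply Commute.sum_right
  intro k' _
  exact (((h.pow_pow k k').smul_left (c k)).smul_right (d k'))

lemma dg_reduce {ι : Type*} [DecidableEq ι] (S : Finset ι) (g : ι → A) (V : A)
    (p₁ p₂ : ι) (h₁ : p₁ ∈ S) (h₂ : p₂ ∈ S) (hne : p₁ ≠ p₂)
    (hcomm : ∀ q ∈ S, q ≠ p₁ → q ≠ p₂ → Commute (g q) V) :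
    ⁅∑ q ∈ S, g q, V⁆ = ⁅g p₁ + g p₂, V⁆ := by
  rw [dg_sum_lie, dg_add_lie]
  rw [← Finset.add_sum_erase _ _ h₁]
  congr 1
  have h₂' : p₂ ∈ S.erase p₁ := Finset.mem_erase.mpr ⟨hne.symm, h₂⟩
  rw [← Finset.add_sum_erase _ _ h₂']
  have : ∑ q ∈ (S.erase p₁).erase p₂, ⁅g q, V⁆ = 0 := by
    apply Finset.sum_eq_zero
    intro q hq
    simp only [Finset.mem_erase] at hq
    have := hcomm q hq.2.2 hq.2.1 hq.1
    rw [Ring.lie_def, this.eq, sub_self]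
  rw [this, add_zero]

lemma dg_parity_ne {N : ℕ} (hN : 2 ≤ N) {a b : ℕ} (h : (a + b) % 2 = 1) :
    ¬(a ≡ b [MOD 2*N]) := by
  intro hab
  have h2 : a ≡ b [MOD 2] := Nat.ModEq.of_dvd ⟨N, rfl⟩ hab
  unfold Nat.ModEq at h2
  omega

lemma dg_cancel_two {N : ℕ} (hN : 2 ≤ N) {a b : ℕ} (h : 2*a ≡ 2*b [MOD 2*N]) :
    a ≡ b [MOD N] := Nat.ModEq.mul_left_cancel' (by omega) h
end Glob

/-- Theorem 3 of the paper.
Let `n ≥ 2`, `ω = exp(2πi/n)`, and let `η_j` (indexed cyclically mod `2N`, `N ≥ 2`)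
satisfy `η_j η_{j+1} = ω η_{j+1} η_j`, `η_j η_k = η_k η_j` for `k ≢ j ± 1 (mod 2N)`,
and `η_j^n = 1`.  Then
`A₀ = Σ_{j=1}^{N} Σ_{k=1}^{n−1} η_{2j−1}^k / (1 − ω^{−k})` and
`A₁ = Σ_{j=1}^{N} Σ_{k=1}^{n−1} η_{2j}^k / (1 − ω^{−k})` satisfy the Dolan–Grady
condition with constant `C = n²`. -/
theorem dolan_grady_superintegrable_chiral_potts
    (n : ℕ) (hn : 2 ≤ n)
    (N : ℕ) (hN : 2 ≤ N) (A : Type*) [Ring A] [Algebra ℂ A]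
    (ω : ℂ) (hω : ω = Complex.exp (2 * Real.pi * Complex.I / n))
    (η : ZMod (2 * N) → A)
    (hanti : ∀ j : ZMod (2 * N), η j * η (j + 1) = ω • (η (j + 1) * η j))
    (hcomm : ∀ j l : ZMod (2 * N), l ≠ j + 1 → l ≠ j - 1 → η j * η l = η l * η j)
    (hpow : ∀ j : ZMod (2 * N), η j ^ n = 1)
    (A₀ A₁ : A)
    (hA₀ : A₀ = ∑ j ∈ Finset.range N, ∑ k ∈ Finset.Icc 1 (n - 1),
      (1 - (ω ^ k)⁻¹)⁻¹ • η (2 * (j : ZMod (2 * N)) + 1) ^ k)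
    (hA₁ : A₁ = ∑ j ∈ Finset.range N, ∑ k ∈ Finset.Icc 1 (n - 1),
      (1 - (ω ^ k)⁻¹)⁻¹ • η (2 * (j : ZMod (2 * N)) + 2) ^ k) :
    ⁅A₀, ⁅A₀, ⁅A₀, A₁⁆⁆⁆ = ((n : ℂ) ^ 2) • ⁅A₀, A₁⁆ ∧
    ⁅A₁, ⁅A₁, ⁅A₁, A₀⁆⁆⁆ = ((n : ℂ) ^ 2) • ⁅A₁, A₀⁆ := by
  have hprim : IsPrimitiveRoot ω n := by
    rw [hω]; exact Complex.isPrimitiveRoot_exp n (by omega)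
  set u : ℕ → A := fun s =>
    ∑ k ∈ Finset.Icc 1 (n-1), (1 - (ω^k)⁻¹)⁻¹ • η ((s : ℕ) : ZMod (2*N)) ^ k with hu
  -- sums rewritten through `u`
  have hA₀' : A₀ = ∑ p ∈ range N, u (2*p+1) := by
    rw [hA₀]
    refine Finset.sum_congr rfl fun p _ => ?_
    simp only [hu]
    have : ((2*p+1 : ℕ) : ZMod (2*N)) = 2 * (p : ZMod (2*N)) + 1 := by push_cast; ring
    rw [this]
  have hA₁' : A₁ = ∑ p ∈ range N, u (2*p+2) := by
    rw [hA₁]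
    refine Finset.sum_congr rfl fun p _ => ?_
    simp only [hu]
    have : ((2*p+2 : ℕ) : ZMod (2*N)) = 2 * (p : ZMod (2*N)) + 2 := by push_cast; ring
    rw [this]
  -- congruent sites give equal `u`
  have hsite : ∀ s t : ℕ, s ≡ t [MOD 2*N] → u s = u t := by
    intro s t hst
    simp only [hu]
    rw [(ZMod.natCast_eq_natCast_iff s t (2*N)).mpr hst]
  -- commuting generators
  have hCη : ∀ s t : ℕ, ¬(t ≡ s+1 [MOD 2*N]) → ¬(t+1 ≡ s [MOD 2*N]) →
      Commute (η (s : ZMod (2*N))) (η (t : ZMod (2*N))) := by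
    intro s t h1 h2
    have e1 : (t : ZMod (2*N)) ≠ (s : ZMod (2*N)) + 1 := by
      rw [show ((s : ZMod (2*N)) + 1) = ((s+1 : ℕ) : ZMod (2*N)) by push_cast; ring,
        Ne, ZMod.natCast_eq_natCast_iff]
      exact h1
    have e2 : (t : ZMod (2*N)) ≠ (s : ZMod (2*N)) - 1 := by
      rw [Ne, eq_sub_iff_add_eq,
        show ((t : ZMod (2*N)) + 1) = ((t+1 : ℕ) : ZMod (2*N)) by push_cast; ring,
        ZMod.natCast_eq_natCast_iff]
      exact h2
    exact hcomm _ _ e1 e2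
  have hCu : ∀ s t : ℕ, ¬(t ≡ s+1 [MOD 2*N]) → ¬(t+1 ≡ s [MOD 2*N]) →
      Commute (u s) (u t) := by
    intro s t h1 h2
    simp only [hu]
    exact dg_commute_poly (hCη s t h1 h2) _ _ _ _
  -- same parity sites always commute
  have hCpar : ∀ s t : ℕ, (s + t) % 2 = 0 → Commute (u s) (u t) := by
    intro s t hst
    exact hCu s t (dg_parity_ne hN (by omega)) (dg_parity_ne hN (by omega))
  -- arithmetic helpers
  have hqeq : ∀ p q : ℕ, p < N → q < N → (2*p ≡ 2*q [MOD 2*N]) → p = q := by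
    intro p q hp hq h
    have h2 := dg_cancel_two hN h
    rwa [Nat.ModEq, Nat.mod_eq_of_lt hp, Nat.mod_eq_of_lt hq] at h2
  -- mixed commutation, direction 0
  have hCmix0 : ∀ p q : ℕ, p < N → q < N → q ≠ p → q ≠ (p+1) % N →
      Commute (u (2*q+1)) (u (2*p+2)) := by
    intro p q hp hq hqp hqp'
    apply hCu
    · intro h
      have h2 : 2*(p+1) ≡ 2*(q+1) [MOD 2*N] := by
        have e1 : 2*(p+1) = 2*p+2 := by ring
        have e2 : 2*(q+1) = 2*q+1+1 := by ring
        rw [e1, e2]; exact h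
      have h3 : 2*p ≡ 2*q [MOD 2*N] := by
        have e1 : 2*p + 2 = 2*(p+1) := by ring
        have e2 : 2*q + 2 = 2*(q+1) := by ring
        exact Nat.ModEq.add_right_cancel' 2 (by rw [e1, e2]; exact h2)
      exact hqp (hqeq p q hp hq h3).symm
    · intro h
      -- 2p+2+1 ≡ 2q+1 → 2(p+1) ≡ 2q
      have h2 : 2*(p+1) ≡ 2*q [MOD 2*N] := by
        have e1 : 2*(p+1) + 1 = 2*p+2+1 := by ring
        exact Nat.ModEq.add_right_cancel' 1 (by rw [e1]; exact h)
      have h3 := dg_cancel_two hN h2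
      rw [Nat.ModEq, Nat.mod_eq_of_lt hq] at h3
      exact hqp' h3.symm
  -- mixed commutation, direction 1
  have hCmix1 : ∀ p q : ℕ, p < N → q < N → q ≠ p → q ≠ (p+N-1) % N →
      Commute (u (2*q+2)) (u (2*p+1)) := by
    intro p q hp hq hqp hqp'
    apply hCu
    · intro h
      -- 2p+1 ≡ 2q+2+1 → 2p ≡ 2(q+1) → p ≡ q+1 [MOD N] → q = (p+N-1)%N
      have h2 : 2*p ≡ 2*(q+1) [MOD 2*N] := by
        have e1 : 2*(q+1) + 1 = 2*q+2+1 := by ring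
        exact Nat.ModEq.add_right_cancel' 1 (by rw [e1]; exact h)
      have h3 := dg_cancel_two hN h2
      -- h3 : p ≡ q+1 [MOD N]; so q + 1 ≡ p, q ≡ p + N - 1
      have h4 : (p + N - 1) % N = q := by
        have h5 : (q + 1) % N = p % N := h3.symm
        rw [Nat.mod_eq_of_lt hp] at h5
        rcases Nat.lt_or_ge (q+1) N with hqN | hqN
        · rw [Nat.mod_eq_of_lt hqN] at h5
          have e : p + N - 1 = q + 1*N := by omega
          rw [e, Nat.add_mul_mod_self_right, Nat.mod_eq_of_lt hq]
        · have hq1 : q + 1 = N := by omega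
          rw [hq1, Nat.mod_self] at h5
          have e : p + N - 1 = N - 1 := by omega
          rw [e, Nat.mod_eq_of_lt (by omega)]
          omega
      exact hqp' h4.symm
    · intro h
      -- 2p+1+1 ≡ 2q+2 → 2(p+1) ≡ 2(q+1) → p = q
      have h2 : 2*(p+1) ≡ 2*(q+1) [MOD 2*N] := by
        have e1 : 2*(p+1) = 2*p+1+1 := by ring
        have e2 : 2*(q+1) = 2*q+2 := by ring
        rw [e1, e2]; exact h
      have h3 : 2*p ≡ 2*q [MOD 2*N] := by
        have e1 : 2*p + 2 = 2*(p+1) := by ring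
        have e2 : 2*q + 2 = 2*(q+1) := by ring
        exact Nat.ModEq.add_right_cancel' 2 (by rw [e1, e2]; exact h2)
      exact hqp (hqeq p q hp hq h3).symm
  constructor
  · -- direction 0
    have key0 : ∀ p, p < N → ⁅A₀, ⁅A₀, ⁅A₀, u (2*p+2)⁆⁆⁆ = ((n:ℂ)^2) • ⁅A₀, u (2*p+2)⁆ := by
      intro p hp
      set p' := (p+1) % N with hp'def
      have hp'lt : p' < N := Nat.mod_lt _ (by omega)
      have hp'ne : p ≠ p' := by
        rw [hp'def]
        rcases Nat.lt_or_ge (p+1) N with h | h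
        · rw [Nat.mod_eq_of_lt h]; omega
        · have : p + 1 = N := by omega
          rw [this, Nat.mod_self]; omega
      have hgp' : u (2*p'+1) = u (2*p+3) := by
        apply hsite
        have : (p+1) % N ≡ p+1 [MOD N] := Nat.mod_modEq _ _
        have h2 : 2*((p+1)%N) ≡ 2*(p+1) [MOD 2*N] := Nat.ModEq.mul_left' 2 this
        have h3 := Nat.ModEq.add_right 1 h2
        have e : 2*(p+1)+1 = 2*p+3 := by ring
        rw [hp'def]
        rw [e] at h3
        exact h3
      set W := u (2*p+1) + u (2*p+3) with hWdef
      have hredV : ∀ V : A,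
          (∀ q, q < N → q ≠ p → q ≠ p' → Commute (u (2*q+1)) V) → ⁅A₀, V⁆ = ⁅W, V⁆ := by
        intro V hV
        rw [hA₀', dg_reduce (range N) (fun q => u (2*q+1)) V p p'
          (Finset.mem_range.mpr hp) (Finset.mem_range.mpr hp'lt) hp'ne
          (fun q hq h1 h2 => hV q (Finset.mem_range.mp hq) h1 h2)]
        rw [hWdef, hgp']
      have hc1 : ∀ q, Commute (u (2*q+1)) (u (2*p+1)) := fun q => hCpar _ _ (by omega)
      have hc3 : ∀ q, Commute (u (2*q+1)) (u (2*p+3)) := fun q => hCpar _ _ (by omega)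
      have hc2 : ∀ q, q < N → q ≠ p → q ≠ p' → Commute (u (2*q+1)) (u (2*p+2)) :=
        fun q hq h1 h2 => hCmix0 p q hp hq h1 h2
      have hcW : ∀ q, Commute (u (2*q+1)) W := by
        intro q; rw [hWdef]; exact (hc1 q).add_right (hc3 q)
      have e1 : ⁅A₀, u (2*p+2)⁆ = ⁅W, u (2*p+2)⁆ := hredV _ (fun q hq h1 h2 => hc2 q hq h1 h2)
      have e2 : ⁅A₀, ⁅W, u (2*p+2)⁆⁆ = ⁅W, ⁅W, u (2*p+2)⁆⁆ :=
        hredV _ (fun q hq h1 h2 => dg_commute_lie (hcW q) (hc2 q hq h1 h2))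
      have e3 : ⁅A₀, ⁅W, ⁅W, u (2*p+2)⁆⁆⁆ = ⁅W, ⁅W, ⁅W, u (2*p+2)⁆⁆⁆ :=
        hredV _ (fun q hq h1 h2 =>
          dg_commute_lie (hcW q) (dg_commute_lie (hcW q) (hc2 q hq h1 h2)))
      have c1 : ((2*p+1 : ℕ) : ZMod (2*N)) + 1 = ((2*p+2 : ℕ) : ZMod (2*N)) := by
        push_cast; ring
      have c2 : ((2*p+2 : ℕ) : ZMod (2*N)) + 1 = ((2*p+3 : ℕ) : ZMod (2*N)) := by
        push_cast; ring
      have hxy : η ((2*p+1 : ℕ) : ZMod (2*N)) * η ((2*p+2 : ℕ) : ZMod (2*N))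
          = ω • (η ((2*p+2 : ℕ) : ZMod (2*N)) * η ((2*p+1 : ℕ) : ZMod (2*N))) := by
        have h := hanti (((2*p+1 : ℕ)) : ZMod (2*N)); rwa [c1] at h
      have hyx' : η ((2*p+2 : ℕ) : ZMod (2*N)) * η ((2*p+3 : ℕ) : ZMod (2*N))
          = ω • (η ((2*p+3 : ℕ) : ZMod (2*N)) * η ((2*p+2 : ℕ) : ZMod (2*N))) := by
        have h := hanti (((2*p+2 : ℕ)) : ZMod (2*N)); rwa [c2] at h
      have hxx' : η ((2*p+1 : ℕ) : ZMod (2*N)) * η ((2*p+3 : ℕ) : ZMod (2*N))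
          = η ((2*p+3 : ℕ) : ZMod (2*N)) * η ((2*p+1 : ℕ) : ZMod (2*N)) :=
        (hCη (2*p+1) (2*p+3) (dg_parity_ne hN (by omega)) (dg_parity_ne hN (by omega))).eq
      have hloc := dg_local hn hprim hxy hyx' hxx' (hpow _) (hpow _) (hpow _)
        W (u (2*p+2)) (by rw [hWdef]) (by simp only [hu])
      rw [e1, e2, e3, hloc]
    rw [hA₁']
    simp only [dg_lie_sum]
    rw [Finset.smul_sum]
    refine Finset.sum_congr rfl fun p hp => ?_
    exact key0 p (Finset.mem_range.mp hp)
  · -- direction 1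
    have key1 : ∀ p, p < N → ⁅A₁, ⁅A₁, ⁅A₁, u (2*p+1)⁆⁆⁆ = ((n:ℂ)^2) • ⁅A₁, u (2*p+1)⁆ := by
      intro p hp
      set p' := (p+N-1) % N with hp'def
      have hp'lt : p' < N := Nat.mod_lt _ (by omega)
      have hp'ne : p ≠ p' := by
        rw [hp'def]
        rcases Nat.eq_zero_or_pos p with h | h
        · subst h
          rw [Nat.mod_eq_of_lt (by omega)]; omega
        · have : (p+N-1) % N = p - 1 := by
            have e : p+N-1 = (p-1) + 1*N := by omega
            rw [e, Nat.add_mul_mod_self_right, Nat.mod_eq_of_lt (by omega)]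
          omega
      have hgp' : u (2*p'+2) = u (2*p) := by
        apply hsite
        have h1 : (p+N-1) % N ≡ p+N-1 [MOD N] := Nat.mod_modEq _ _
        have h2 : 2*((p+N-1)%N) ≡ 2*(p+N-1) [MOD 2*N] := Nat.ModEq.mul_left' 2 h1
        have h3 := Nat.ModEq.add_right 2 h2
        have e : 2*(p+N-1)+2 = 2*p + N*2 := by omega
        rw [e] at h3
        have h4 : 2*p + N*2 ≡ 2*p [MOD 2*N] := by
          show (2*p + N*2) % (2*N) = (2*p) % (2*N)
          rw [show 2*p + N*2 = 2*p + 1*(2*N) from by ring, Nat.add_mul_mod_self_right]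
        rw [hp'def]
        exact h3.trans h4
      set W := u (2*p) + u (2*p+2) with hWdef
      have hredV : ∀ V : A,
          (∀ q, q < N → q ≠ p → q ≠ p' → Commute (u (2*q+2)) V) → ⁅A₁, V⁆ = ⁅W, V⁆ := by
        intro V hV
        rw [hA₁', dg_reduce (range N) (fun q => u (2*q+2)) V p' p
          (Finset.mem_range.mpr hp'lt) (Finset.mem_range.mpr hp) (Ne.symm hp'ne)
          (fun q hq h1 h2 => hV q (Finset.mem_range.mp hq) h2 h1)]
        rw [hWdef, hgp']
      have hc0 : ∀ q, Commute (u (2*q+2)) (u (2*p)) := fun q => hCpar _ _ (by omega)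
      have hc2 : ∀ q, Commute (u (2*q+2)) (u (2*p+2)) := fun q => hCpar _ _ (by omega)
      have hc1 : ∀ q, q < N → q ≠ p → q ≠ p' → Commute (u (2*q+2)) (u (2*p+1)) :=
        fun q hq h1 h2 => hCmix1 p q hp hq h1 h2
      have hcW : ∀ q, Commute (u (2*q+2)) W := by
        intro q; rw [hWdef]; exact (hc0 q).add_right (hc2 q)
      have e1 : ⁅A₁, u (2*p+1)⁆ = ⁅W, u (2*p+1)⁆ := hredV _ (fun q hq h1 h2 => hc1 q hq h1 h2)
      have e2 : ⁅A₁, ⁅W, u (2*p+1)⁆⁆ = ⁅W, ⁅W, u (2*p+1)⁆⁆ :=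
        hredV _ (fun q hq h1 h2 => dg_commute_lie (hcW q) (hc1 q hq h1 h2))
      have e3 : ⁅A₁, ⁅W, ⁅W, u (2*p+1)⁆⁆⁆ = ⁅W, ⁅W, ⁅W, u (2*p+1)⁆⁆⁆ :=
        hredV _ (fun q hq h1 h2 =>
          dg_commute_lie (hcW q) (dg_commute_lie (hcW q) (hc1 q hq h1 h2)))
      have c1 : ((2*p : ℕ) : ZMod (2*N)) + 1 = ((2*p+1 : ℕ) : ZMod (2*N)) := by
        push_cast; ring
      have c2 : ((2*p+1 : ℕ) : ZMod (2*N)) + 1 = ((2*p+2 : ℕ) : ZMod (2*N)) := by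
        push_cast; ring
      have hxy : η ((2*p : ℕ) : ZMod (2*N)) * η ((2*p+1 : ℕ) : ZMod (2*N))
          = ω • (η ((2*p+1 : ℕ) : ZMod (2*N)) * η ((2*p : ℕ) : ZMod (2*N))) := by
        have h := hanti (((2*p : ℕ)) : ZMod (2*N)); rwa [c1] at h
      have hyx' : η ((2*p+1 : ℕ) : ZMod (2*N)) * η ((2*p+2 : ℕ) : ZMod (2*N))
          = ω • (η ((2*p+2 : ℕ) : ZMod (2*N)) * η ((2*p+1 : ℕ) : ZMod (2*N))) := by
        have h := hanti (((2*p+1 : ℕ)) : ZMod (2*N)); rwa [c2] at h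
      have hxx' : η ((2*p : ℕ) : ZMod (2*N)) * η ((2*p+2 : ℕ) : ZMod (2*N))
          = η ((2*p+2 : ℕ) : ZMod (2*N)) * η ((2*p : ℕ) : ZMod (2*N)) :=
        (hCη (2*p) (2*p+2) (dg_parity_ne hN (by omega)) (dg_parity_ne hN (by omega))).eq
      have hloc := dg_local hn hprim hxy hyx' hxx' (hpow _) (hpow _) (hpow _)
        W (u (2*p+1)) (by rw [hWdef]) (by simp only [hu])
      rw [e1, e2, e3, hloc]
    rw [hA₀']
    simp only [dg_lie_sum]
    rw [Finset.smul_sum]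
    refine Finset.sum_congr rfl fun p hp => ?_
    exact key1 p (Finset.mem_range.mp hp)
end
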